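/- Let (M, ⪯, ⊕, 0) be an ordered partial commutative monoid that is ⊕-downward closed, i.e. if x ⪯ x' and x' ⊥ y then x ⊥ y. For nonempty subsets P, Q of M define P ⊕ Q := { x ⊕ y : x ∈ P, y ∈ Q, x ⊥ y } (defined when this set is nonempty), and P ⪯♯ Q ⟺ for every y ∈ Q there exists x ∈ P with x ⪯ y. Then (𝒫⁺M, ⪯♯, ⊕, {0}) is an ordered partial commutative monoid. -/
import Mathlib


/-- An ordered partial commutative monoid (OPCM), given by a preorder `le`,
a definedness predicate `D` (written `x ⊥ y` in the paper), a (total extension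
of a) partial binary operation `op`, and an identity `zero`.  The equivalence
`x ≅ y` is `le x y ∧ le y x`. -/
structure IsOPCM {α : Type*} (le : α → α → Prop) (D : α → α → Prop)
    (op : α → α → α) (zero : α) : Prop where
  refl : ∀ x, le x x
  trans : ∀ {x y z}, le x y → le y z → le x z
  zero_defined : ∀ x, D zero x
  zero_op : ∀ x, le (op zero x) x ∧ le x (op zero x)
  comm_defined : ∀ {x y}, D x y → D y x
  comm : ∀ {x y}, D x y → le (op x y) (op y x) ∧ le (op y x) (op x y)
  assoc_defined_left : ∀ {x y z}, D y z → D x (op y z) → D x y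
  assoc_defined : ∀ {x y z}, D y z → D x (op y z) → D (op x y) z
  assoc : ∀ {x y z}, D y z → D x (op y z) →
    le (op x (op y z)) (op (op x y) z) ∧ le (op (op x y) z) (op x (op y z))
  mono : ∀ {x₁ x₂ y}, D x₁ y → D x₂ y → le x₁ x₂ → le (op x₁ y) (op x₂ y)

attribute [local instance] Classical.propDecidable

lemma opcm_assoc_rev {M : Type*} {le D : M → M → Prop} {op : M → M → M} {zero : M}
    (h : IsOPCM le D op zero)
    (hdc : ∀ x x' y : M, le x x' → D x' y → D x y)
    {a b c : M} (hab : D a b) (habc : D (op a b) c) :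
    D b c ∧ D a (op b c) := by
  have hba : D b a := h.comm_defined hab
  have h1 : D (op b a) c := hdc _ _ _ (h.comm hab).2 habc
  have h2 : D c (op b a) := h.comm_defined h1
  have hcb : D c b := h.assoc_defined_left hba h2
  have hbc : D b c := h.comm_defined hcb
  have h3 : D (op c b) a := h.assoc_defined hba h2
  have h4 : D (op b c) a := hdc _ _ _ (h.comm hbc).1 h3
  exact ⟨hbc, h.comm_defined h4⟩

/-- possibilities over a ⊕-downward closed OPCM: the nonempty
subsets of `M`, with `P ⪯♯ Q` and elementwise combination
`P ⊕ Q = { x ⊕ y | x ∈ P, y ∈ Q, x ⊥ y }` (defined when nonempty) and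
identity `{0}`, form an OPCM. -/
theorem possibilities_over_OPCM {M : Type*} (le D : M → M → Prop)
    (op : M → M → M) (zero : M)
    (h : IsOPCM le D op zero)
    (hdc : ∀ x x' y : M, le x x' → D x' y → D x y) :
    IsOPCM (α := {S : Set M // S.Nonempty})
      (fun P Q => ∀ y ∈ Q.val, ∃ x ∈ P.val, le x y)
      (fun P Q => {z : M | ∃ x ∈ P.val, ∃ y ∈ Q.val, D x y ∧ z = op x y}.Nonempty)
      (fun P Q =>
        if h' : {z : M | ∃ x ∈ P.val, ∃ y ∈ Q.val, D x y ∧ z = op x y}.Nonempty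
        then ⟨{z : M | ∃ x ∈ P.val, ∃ y ∈ Q.val, D x y ∧ z = op x y}, h'⟩ else P)
      ⟨{zero}, Set.singleton_nonempty zero⟩ := by
  constructor
  · intro P y hy; exact ⟨y, hy, h.refl y⟩
  · intro P Q R hPQ hQR z hz
    obtain ⟨y, hy, hyz⟩ := hQR z hz
    obtain ⟨x, hx, hxy⟩ := hPQ y hy
    exact ⟨x, hx, h.trans hxy hyz⟩
  · intro P
    obtain ⟨x, hx⟩ := P.2
    exact ⟨op zero x, zero, rfl, x, hx, h.zero_defined x, rfl⟩
  · intro P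
    have hne : {z : M | ∃ x ∈ ({zero} : Set M), ∃ y ∈ P.val, D x y ∧ z = op x y}.Nonempty := by
      obtain ⟨x, hx⟩ := P.2
      exact ⟨op zero x, zero, rfl, x, hx, h.zero_defined x, rfl⟩
    simp only [dif_pos hne]
    constructor
    · intro y hy
      exact ⟨op zero y, ⟨zero, rfl, y, hy, h.zero_defined y, rfl⟩, (h.zero_op y).1⟩
    · rintro z ⟨x, hx, y, hy, _, rfl⟩
      rcases hx with rfl
      exact ⟨y, hy, (h.zero_op y).2⟩
  · rintro P Q ⟨z, x, hx, y, hy, hxy, rfl⟩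
    exact ⟨op y x, y, hy, x, hx, h.comm_defined hxy, rfl⟩
  · intro P Q hPQ
    have hQP : {z : M | ∃ x ∈ Q.val, ∃ y ∈ P.val, D x y ∧ z = op x y}.Nonempty := by
      obtain ⟨z, x, hx, y, hy, hxy, rfl⟩ := hPQ
      exact ⟨op y x, y, hy, x, hx, h.comm_defined hxy, rfl⟩
    simp only [dif_pos hPQ, dif_pos hQP]
    constructor
    · rintro z ⟨y, hy, x, hx, hyx, rfl⟩
      exact ⟨op x y, ⟨x, hx, y, hy, h.comm_defined hyx, rfl⟩, (h.comm hyx).2⟩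
    · rintro z ⟨x, hx, y, hy, hxy, rfl⟩
      exact ⟨op y x, ⟨y, hy, x, hx, h.comm_defined hxy, rfl⟩, (h.comm hxy).2⟩
  · intro P Q R hQR hP
    rw [dif_pos hQR] at hP
    obtain ⟨z, a, ha, w, hw, haw, rfl⟩ := hP
    obtain ⟨b, hb, c, hc, hbc, rfl⟩ := hw
    exact ⟨op a b, a, ha, b, hb, h.assoc_defined_left hbc haw, rfl⟩
  · intro P Q R hQR hP
    rw [dif_pos hQR] at hP
    have hPQ : {z : M | ∃ x ∈ P.val, ∃ y ∈ Q.val, D x y ∧ z = op x y}.Nonempty := by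
      obtain ⟨z, a, ha, w, hw, haw, rfl⟩ := hP
      obtain ⟨b, hb, c, hc, hbc, rfl⟩ := hw
      exact ⟨op a b, a, ha, b, hb, h.assoc_defined_left hbc haw, rfl⟩
    rw [dif_pos hPQ]
    obtain ⟨z, a, ha, w, hw, haw, rfl⟩ := hP
    obtain ⟨b, hb, c, hc, hbc, rfl⟩ := hw
    exact ⟨op (op a b) c, op a b, ⟨a, ha, b, hb, h.assoc_defined_left hbc haw, rfl⟩,
      c, hc, h.assoc_defined hbc haw, rfl⟩
  · intro P Q R hQR hP
    rw [dif_pos hQR] at hP ⊢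
    have hPQ : {z : M | ∃ x ∈ P.val, ∃ y ∈ Q.val, D x y ∧ z = op x y}.Nonempty := by
      obtain ⟨z, a, ha, w, hw, haw, rfl⟩ := hP
      obtain ⟨b, hb, c, hc, hbc, rfl⟩ := hw
      exact ⟨op a b, a, ha, b, hb, h.assoc_defined_left hbc haw, rfl⟩
    have hPQR : {z : M | ∃ x ∈ ({z : M | ∃ x ∈ P.val, ∃ y ∈ Q.val, D x y ∧ z = op x y} : Set M),
        ∃ y ∈ R.val, D x y ∧ z = op x y}.Nonempty := by
      obtain ⟨z, a, ha, w, hw, haw, rfl⟩ := hP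
      obtain ⟨b, hb, c, hc, hbc, rfl⟩ := hw
      exact ⟨op (op a b) c, op a b, ⟨a, ha, b, hb, h.assoc_defined_left hbc haw, rfl⟩,
        c, hc, h.assoc_defined hbc haw, rfl⟩
    rw [dif_pos hP, dif_pos hPQ, dif_pos hPQR]
    constructor
    · rintro z ⟨w, ⟨a, ha, b, hb, hab, rfl⟩, c, hc, habc, rfl⟩
      obtain ⟨hbc, habc'⟩ := opcm_assoc_rev h hdc hab habc
      exact ⟨op a (op b c), ⟨a, ha, op b c, ⟨b, hb, c, hc, hbc, rfl⟩, habc', rfl⟩,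
        (h.assoc hbc habc').1⟩
    · rintro z ⟨a, ha, w, ⟨b, hb, c, hc, hbc, rfl⟩, habc, rfl⟩
      exact ⟨op (op a b) c, ⟨op a b, ⟨a, ha, b, hb, h.assoc_defined_left hbc habc, rfl⟩,
        c, hc, h.assoc_defined hbc habc, rfl⟩, (h.assoc hbc habc).2⟩
  · intro P₁ P₂ Q h₁ h₂ h₁₂
    simp only [dif_pos h₁, dif_pos h₂]
    rintro z ⟨a₂, ha₂, b, hb, hab₂, rfl⟩
    obtain ⟨a₁, ha₁, hle⟩ := h₁₂ a₂ ha₂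
    have hab₁ : D a₁ b := hdc _ _ _ hle hab₂
    exact ⟨op a₁ b, ⟨a₁, ha₁, b, hb, hab₁, rfl⟩, h.mono hab₁ hab₂ hle⟩
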